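/- arXiv:2402.01482 — 5 statements merged into one kernel-verified Lean document; each statement's English description precedes it below -/
import Mathlib

section
/- Let F be a cumulative distribution function on [0,∞) and define δ(t) = ∫₀^∞ e^{-rt} dF(r) for t ≥ 0. Then δ satisfies the decreasing-impatience inequality δ(t+s) ≥ δ(t)·δ(s) for all t, s ≥ 0. -/
open MeasureTheory Real

lemma aux_integrable (μ : Measure ℝ) [IsProbabilityMeasure μ]
    (hae : ∀ᵐ r ∂μ, 0 ≤ r) (t : ℝ) (ht : 0 ≤ t) :
    Integrable (fun r => Real.exp (-r * t)) μ := by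
  refine (integrable_const (1 : ℝ)).mono' ?_ ?_
  · exact (Continuous.aestronglyMeasurable (by continuity))
  · filter_upwards [hae] with r hr
    rw [Real.norm_eq_abs, abs_of_pos (Real.exp_pos _)]
    exact Real.exp_le_one_iff.2 (by nlinarith)

/-- for a probability measure `μ` on `[0,∞)` (the law whose CDF is `F`),
the weighted discount function `δ t = ∫ e^{-r t} dF(r)` satisfies
`δ (t+s) ≥ δ t * δ s` for all `t, s ≥ 0`. -/
theorem stmt0 (μ : Measure ℝ) [IsProbabilityMeasure μ]
    (hsupp : μ {r : ℝ | r < 0} = 0)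
    (δ : ℝ → ℝ) (hδ : ∀ t, δ t = ∫ r, Real.exp (-r * t) ∂μ) :
    ∀ t s : ℝ, 0 ≤ t → 0 ≤ s → δ (t + s) ≥ δ t * δ s := by
  intro t s ht hs
  have hae : ∀ᵐ r ∂μ, 0 ≤ r := by
    rw [ae_iff]
    convert hsupp using 2
    ext r; simp [not_le]
  set f : ℝ → ℝ := fun r => Real.exp (-r * t) with hf
  set g : ℝ → ℝ := fun r => Real.exp (-r * s) with hg
  have hfi : Integrable f μ := aux_integrable μ hae t ht
  have hgi : Integrable g μ := aux_integrable μ hae s hs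
  have hfgi : Integrable (fun r => f r * g r) μ := by
    have : (fun r => f r * g r) = fun r => Real.exp (-r * (t + s)) := by
      funext r; rw [hf, hg, ← Real.exp_add]; ring_nf
    rw [this]
    exact aux_integrable μ hae (t + s) (by linarith)
  have hfg : δ (t + s) = ∫ r, f r * g r ∂μ := by
    rw [hδ]
    congr 1; funext r; rw [hf, hg, ← Real.exp_add]; ring_nf
  set F := ∫ r, f r ∂μ with hF
  set G := ∫ r, g r ∂μ with hG
  -- key: 0 ≤ ∫ x ∫ y (f x - f y)(g x - g y)
  have key : 0 ≤ ∫ x, (∫ y, (f x - f y) * (g x - g y) ∂μ) ∂μ := by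
    apply integral_nonneg
    intro x
    apply integral_nonneg
    intro y
    have hmono : ∀ (u : ℝ), 0 ≤ u →
        (Real.exp (-x * u) - Real.exp (-y * u)) * (x - y) ≤ 0 := by
      intro u hu
      rcases le_total x y with h | h
      · have : Real.exp (-y * u) ≤ Real.exp (-x * u) :=
          Real.exp_le_exp.2 (by nlinarith)
        nlinarith
      · have : Real.exp (-x * u) ≤ Real.exp (-y * u) :=
          Real.exp_le_exp.2 (by nlinarith)
        nlinarith
    have h1 := hmono t ht
    have h2 := hmono s hs
    -- both (f x - f y) and (g x - g y) have sign opposite to (x - y)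
    rcases le_total x y with h | h
    · have hf' : 0 ≤ f x - f y := by
        have := Real.exp_le_exp.2 (show -y * t ≤ -x * t by nlinarith)
        simp only [hf]; linarith
      have hg' : 0 ≤ g x - g y := by
        have := Real.exp_le_exp.2 (show -y * s ≤ -x * s by nlinarith)
        simp only [hg]; linarith
      positivity
    · have hf' : f x - f y ≤ 0 := by
        have := Real.exp_le_exp.2 (show -x * t ≤ -y * t by nlinarith)
        simp only [hf]; linarith
      have hg' : g x - g y ≤ 0 := by
        have := Real.exp_le_exp.2 (show -x * s ≤ -y * s by nlinarith)
        simp only [hg]; linarith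
      have h3 : 0 ≤ (-(f x - f y)) * (-(g x - g y)) :=
        mul_nonneg (by linarith) (by linarith)
      show 0 ≤ (f x - f y) * (g x - g y)
      nlinarith [h3]
  -- expand the double integral
  have expand : ∀ x : ℝ, (∫ y, (f x - f y) * (g x - g y) ∂μ)
      = f x * g x - f x * G - g x * F + ∫ y, f y * g y ∂μ := by
    intro x
    have e1 : ∀ y, (f x - f y) * (g x - g y)
        = f x * g x - f x * g y - g x * f y + f y * g y := by intro y; ring
    simp_rw [e1]
    rw [integral_add, integral_sub, integral_sub, integral_const,
        integral_const_mul, integral_const_mul]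
    · simp [hF, hG]
    · exact integrable_const _
    · exact hgi.const_mul _
    · exact (integrable_const _).sub (hgi.const_mul _)
    · exact hfi.const_mul _
    · exact ((integrable_const _).sub (hgi.const_mul _)).sub (hfi.const_mul _)
    · exact hfgi
  simp_rw [expand] at key
  rw [integral_add, integral_sub, integral_sub, integral_mul_const,
      integral_mul_const, integral_const] at key
  · simp only [measure_univ, probReal_univ, ENNReal.toReal_one, smul_eq_mul, one_mul, ← hF, ← hG] at key
    rw [hfg, hδ t, hδ s, ← hF, ← hG]
    linarith
  · exact hfgi
  · exact hfi.mul_const _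
  · exact hfgi.sub (hfi.mul_const _)
  · exact hgi.mul_const _
  · exact (hfgi.sub (hfi.mul_const _)).sub (hgi.mul_const _)
  · exact integrable_const _
end

section
/- For r > 0, with a_h = 1 + rh + √(r²h² + 2rh) and x* > 0, lim_{h→0+} a_h^{⌊x*/√h⌋} = e^{√(2r)·x*}. -/
open Real Filter Set

private lemma log_one_add_div :
    Tendsto (fun v : ℝ => Real.log (1 + v) / v) (nhdsWithin 0 {(0:ℝ)}ᶜ) (nhds 1) := by
  have hd : HasDerivAt Real.log 1 1 := by
    simpa using Real.hasDerivAt_log one_ne_zero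
  have hslope := (hasDerivAt_iff_tendsto_slope).1 hd
  have hmap : Tendsto (fun v : ℝ => 1 + v) (nhdsWithin 0 {(0:ℝ)}ᶜ)
      (nhdsWithin 1 {(1:ℝ)}ᶜ) := by
    apply tendsto_nhdsWithin_of_tendsto_nhds_of_eventually_within
    · exact ((continuous_const.add continuous_id).tendsto' 0 1 (by simp)).mono_left
        nhdsWithin_le_nhds
    · filter_upwards [self_mem_nhdsWithin] with v hv
      simp only [Set.mem_compl_iff, Set.mem_singleton_iff] at hv ⊢
      intro h; exact hv (by linarith)
  have := hslope.comp hmap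
  refine this.congr fun v => ?_
  simp [slope_def_field, Real.log_one]

private lemma floor_mul_tendsto (xstar : ℝ) (hx : 0 < xstar) :
    Tendsto (fun t : ℝ => (⌊xstar / t⌋₊ : ℝ) * t) (nhdsWithin 0 (Ioi 0)) (nhds xstar) := by
  have hlo : Tendsto (fun t : ℝ => xstar - t) (nhdsWithin 0 (Ioi 0)) (nhds xstar) := by
    exact ((continuous_const.sub continuous_id).tendsto' 0 xstar (by simp)).mono_left
      nhdsWithin_le_nhds
  refine tendsto_of_tendsto_of_tendsto_of_le_of_le' hlo tendsto_const_nhds ?_ ?_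
  · filter_upwards [self_mem_nhdsWithin] with t ht
    have ht0 : 0 < t := ht
    have h1 : xstar / t - 1 < (⌊xstar / t⌋₊ : ℝ) := Nat.sub_one_lt_floor _
    have h2 : (xstar / t - 1) * t < (⌊xstar / t⌋₊ : ℝ) * t :=
      mul_lt_mul_of_pos_right h1 ht0
    have h3 : (xstar / t - 1) * t = xstar - t := by field_simp
    linarith
  · filter_upwards [self_mem_nhdsWithin] with t ht
    have ht0 : 0 < t := ht
    have h2 : (⌊xstar / t⌋₊ : ℝ) ≤ xstar / t :=
      Nat.floor_le (by positivity)
    calc (⌊xstar / t⌋₊ : ℝ) * t ≤ (xstar / t) * t := by nlinarith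
      _ = xstar := by field_simp

/-- for `r > 0`, with `a_h = 1 + rh + √(r²h² + 2rh)` and `x* > 0`,
`a_h ^ ⌊x*/√h⌋ → e^{√(2r) x*}` as `h → 0+`. -/
theorem stmt4 (r : ℝ) (hr : 0 < r) (xstar : ℝ) (hx : 0 < xstar)
    (a : ℝ → ℝ)
    (ha : ∀ h : ℝ, a h = 1 + r * h + Real.sqrt (r ^ 2 * h ^ 2 + 2 * r * h)) :
    Tendsto (fun h : ℝ => a h ^ ⌊xstar / Real.sqrt h⌋₊)
      (nhdsWithin 0 (Ioi 0)) (nhds (Real.exp (Real.sqrt (2 * r) * xstar))) := by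
  set u : ℝ → ℝ := fun t => r * t ^ 2 + t * Real.sqrt (r ^ 2 * t ^ 2 + 2 * r) with hu_def
  have hu_pos : ∀ t : ℝ, 0 < t → 0 < u t := by
    intro t ht
    simp only [hu_def]
    positivity
  -- u tends to 0 within positives
  have hu_tendsto : Tendsto u (nhdsWithin 0 (Ioi 0)) (nhdsWithin 0 {(0:ℝ)}ᶜ) := by
    apply tendsto_nhdsWithin_of_tendsto_nhds_of_eventually_within
    · have hc : Continuous u := by
        apply Continuous.add
        · exact continuous_const.mul (continuous_pow 2)
        · exact continuous_id.mul (Real.continuous_sqrt.comp (by continuity))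
      have : Tendsto u (nhds 0) (nhds (u 0)) := hc.tendsto 0
      simpa [hu_def] using this.mono_left nhdsWithin_le_nhds
    · filter_upwards [self_mem_nhdsWithin] with t ht
      exact (hu_pos t ht).ne'
  -- quotient u t / t tends to sqrt (2r)
  have hrat : Tendsto (fun t : ℝ => u t / t) (nhdsWithin 0 (Ioi 0))
      (nhds (Real.sqrt (2 * r))) := by
    have hc : Tendsto (fun t : ℝ => r * t + Real.sqrt (r ^ 2 * t ^ 2 + 2 * r))
        (nhds 0) (nhds (Real.sqrt (2 * r))) := by
      have hcont : Continuous (fun t : ℝ => r * t + Real.sqrt (r ^ 2 * t ^ 2 + 2 * r)) := by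
        exact (continuous_const.mul continuous_id).add
          (Real.continuous_sqrt.comp (by continuity))
      have := hcont.tendsto 0
      simpa using this
    refine Tendsto.congr' ?_ (hc.mono_left nhdsWithin_le_nhds)
    filter_upwards [self_mem_nhdsWithin] with t ht
    have ht0 : (t : ℝ) ≠ 0 := (ne_of_gt ht)
    simp only [hu_def]
    field_simp
  -- log(1 + u t)/u t tends to 1
  have hlogu : Tendsto (fun t : ℝ => Real.log (1 + u t) / u t)
      (nhdsWithin 0 (Ioi 0)) (nhds 1) := log_one_add_div.comp hu_tendsto
  -- the key limit in variable t
  have key : Tendsto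
      (fun t : ℝ => (⌊xstar / t⌋₊ : ℝ) * Real.log (1 + u t))
      (nhdsWithin 0 (Ioi 0)) (nhds (Real.sqrt (2 * r) * xstar)) := by
    have hmul := ((floor_mul_tendsto xstar hx).mul hlogu).mul hrat
    have : xstar * 1 * Real.sqrt (2 * r) = Real.sqrt (2 * r) * xstar := by ring
    rw [this] at hmul
    refine hmul.congr' ?_
    filter_upwards [self_mem_nhdsWithin] with t ht
    have ht0 : (t : ℝ) ≠ 0 := ne_of_gt ht
    have hut : u t ≠ 0 := (hu_pos t ht).ne'
    field_simp
  -- transfer via t = sqrt h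
  have hsq : Tendsto Real.sqrt (nhdsWithin 0 (Ioi 0)) (nhdsWithin 0 (Ioi 0)) := by
    apply tendsto_nhdsWithin_of_tendsto_nhds_of_eventually_within
    · have := Real.continuous_sqrt.tendsto 0
      simpa using this.mono_left nhdsWithin_le_nhds
    · filter_upwards [self_mem_nhdsWithin] with h hh
      exact Real.sqrt_pos.2 hh
  have main : Tendsto (fun h : ℝ => (⌊xstar / Real.sqrt h⌋₊ : ℝ) * Real.log (a h))
      (nhdsWithin 0 (Ioi 0)) (nhds (Real.sqrt (2 * r) * xstar)) := by
    refine (key.comp hsq).congr' ?_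
    filter_upwards [self_mem_nhdsWithin] with h hh
    have hh0 : (0:ℝ) ≤ h := le_of_lt hh
    have hsqr : Real.sqrt h ^ 2 = h := Real.sq_sqrt hh0
    have h1 : u (Real.sqrt h) = r * h + Real.sqrt (r ^ 2 * h ^ 2 + 2 * r * h) := by
      simp only [hu_def, hsqr]
      congr 1
      rw [← Real.sqrt_mul hh0]
      congr 1
      ring
    simp only [Function.comp, h1, ha h]
    ring_nf
  have hexp := (Real.continuous_exp.tendsto _).comp main
  refine hexp.congr' ?_
  filter_upwards [self_mem_nhdsWithin] with h hh
  have hpos : 0 < a h := by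
    rw [ha h]
    have := Real.sqrt_nonneg (r ^ 2 * h ^ 2 + 2 * r * h)
    nlinarith [(show (0:ℝ) < h from hh).le]
  simp only [Function.comp]
  rw [Real.exp_nat_mul, Real.exp_log hpos]
end

section
/- Let F be a probability distribution supported on [1,2], ν ≥ -1/2, and λ = ∫₁² (√(ν² + 2r) + ν) dF(r). For h > 0 define Dₕ = ∫₁² (1 + rh - √(r²h² + (2r+ν²)h))/(1 + ν√h) dF(r) and a^h = K·(1 - Dₕ)/(e^{√h} - Dₕ) for a constant K > 0. Then lim_{h→0+} a^h = λK/(1+λ). -/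
open MeasureTheory Real Filter Set

lemma div_div_div_same' {x y s : ℝ} (hs : s ≠ 0) : (x/s)/(y/s) = x/y := by
  obtain rfl | hy := eq_or_ne y 0
  · simp
  field_simp

/-- with `F` a probability distribution supported on `[1,2]`, `ν ≥ -1/2`,
`λ = ∫ (√(ν²+2r)+ν) dF(r)`, `Dₕ = ∫ (1+rh-√(r²h²+(2r+ν²)h))/(1+ν√h) dF(r)` and
`a^h = K (1-Dₕ)/(e^{√h}-Dₕ)`, one has `a^h → λK/(1+λ)` as `h → 0+`. -/
theorem stmt7 (ν K : ℝ) (hν : ν ≥ -(1/2)) (hK : 0 < K)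
    (μ : Measure ℝ) [IsProbabilityMeasure μ] (hsupp : μ (Set.Icc (1:ℝ) 2)ᶜ = 0)
    (lam : ℝ) (hlam : lam = ∫ r, (Real.sqrt (ν ^ 2 + 2 * r) + ν) ∂μ)
    (D : ℝ → ℝ)
    (hD : ∀ h, D h = ∫ r,
        (1 + r * h - Real.sqrt (r ^ 2 * h ^ 2 + (2 * r + ν ^ 2) * h)) /
          (1 + ν * Real.sqrt h) ∂μ)
    (a : ℝ → ℝ)
    (ha : ∀ h, a h = K * (1 - D h) / (Real.exp (Real.sqrt h) - D h)) :
    Tendsto a (nhdsWithin 0 (Ioi 0)) (nhds (lam * K / (1 + lam))) := by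
  have hmem : ∀ᵐ r ∂μ, r ∈ Set.Icc (1:ℝ) 2 := by
    rw [MeasureTheory.ae_iff]
    exact hsupp
  have hres : μ.restrict (Set.Icc (1:ℝ) 2) = μ :=
    Measure.restrict_eq_self_of_ae_mem hmem
  have hint : ∀ φ : ℝ → ℝ, Continuous φ → Integrable φ μ := by
    intro φ hφ
    rw [← hres]
    exact hφ.continuousOn.integrableOn_compact isCompact_Icc
  -- the rescaled integrand
  set g : ℝ → ℝ → ℝ := fun s r =>
    (ν - r * s + Real.sqrt (r ^ 2 * s ^ 2 + 2 * r + ν ^ 2)) / (1 + ν * s) with hg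
  have hIoo : Ioo (0:ℝ) 1 ∈ nhdsWithin (0:ℝ) (Ioi 0) :=
    Ioo_mem_nhdsGT_of_mem (by norm_num : (0:ℝ) ∈ Ico (0:ℝ) 1)
  have hsq : Tendsto Real.sqrt (nhdsWithin 0 (Ioi 0)) (nhds 0) :=
    (Real.continuous_sqrt.tendsto' 0 0 Real.sqrt_zero).mono_left nhdsWithin_le_nhds
  -- dominated convergence for the integral of g (√h) r
  have key : Tendsto (fun h => ∫ r, g (Real.sqrt h) r ∂μ)
      (nhdsWithin 0 (Ioi 0)) (nhds lam) := by
    rw [hlam]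
    apply tendsto_integral_filter_of_dominated_convergence
        (bound := fun _ => 4 * |ν| + 10)
    · filter_upwards with h
      have hc : Continuous fun r : ℝ =>
          ν - r * Real.sqrt h + Real.sqrt (r ^ 2 * (Real.sqrt h) ^ 2 + 2 * r + ν ^ 2) := by
        fun_prop
      exact (hc.div_const _).aestronglyMeasurable
    · filter_upwards [hIoo] with h hh
      filter_upwards [hmem] with r hr
      have hs0 : 0 ≤ Real.sqrt h := Real.sqrt_nonneg h
      have hs1 : Real.sqrt h ≤ 1 := by
        rw [show (1:ℝ) = Real.sqrt 1 by simp]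
        exact Real.sqrt_le_sqrt hh.2.le
      set s := Real.sqrt h
      have hden : (1:ℝ)/2 ≤ 1 + ν * s := by
        nlinarith [mul_nonneg (by linarith : (0:ℝ) ≤ ν + 1/2) hs0]
      have hs2le : s ^ 2 ≤ 1 := by nlinarith
      have hr2le : r ^ 2 ≤ 4 := by nlinarith [hr.1, hr.2]
      have h4 : r ^ 2 * s ^ 2 ≤ 4 := by
        nlinarith [mul_le_mul_of_nonneg_left hs2le (sq_nonneg r), sq_nonneg r]
      have hX : r ^ 2 * s ^ 2 + 2 * r + ν ^ 2 ≤ (|ν| + 3) ^ 2 := by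
        nlinarith [sq_abs ν, abs_nonneg ν, hr.2, h4]
      have hsqrt_le : Real.sqrt (r ^ 2 * s ^ 2 + 2 * r + ν ^ 2) ≤ |ν| + 3 := by
        calc Real.sqrt (r ^ 2 * s ^ 2 + 2 * r + ν ^ 2) ≤ Real.sqrt ((|ν| + 3) ^ 2) :=
              Real.sqrt_le_sqrt hX
          _ = |ν| + 3 := Real.sqrt_sq (by positivity)
      have hsqrt0 : 0 ≤ Real.sqrt (r ^ 2 * s ^ 2 + 2 * r + ν ^ 2) := Real.sqrt_nonneg _
      have hrs : 0 ≤ r * s := mul_nonneg (by linarith [hr.1]) hs0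
      have hrs2 : r * s ≤ 2 := by nlinarith [hr.1, hr.2]
      have hnum : |ν - r * s + Real.sqrt (r ^ 2 * s ^ 2 + 2 * r + ν ^ 2)| ≤ 2 * |ν| + 5 := by
        rw [abs_le]
        constructor
        · nlinarith [neg_abs_le ν, le_abs_self ν, abs_nonneg ν]
        · nlinarith [neg_abs_le ν, le_abs_self ν, abs_nonneg ν]
      have : ‖g s r‖ = |ν - r * s + Real.sqrt (r ^ 2 * s ^ 2 + 2 * r + ν ^ 2)| / (1 + ν * s) := by
        rw [hg]
        simp only [Real.norm_eq_abs, abs_div]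
        rw [abs_of_pos (by linarith : (0:ℝ) < 1 + ν * s)]
      rw [this]
      calc |ν - r * s + Real.sqrt (r ^ 2 * s ^ 2 + 2 * r + ν ^ 2)| / (1 + ν * s)
          ≤ (2 * |ν| + 5) / (1/2) := by
            apply div_le_div₀ (by positivity) hnum (by norm_num) hden
        _ = 4 * |ν| + 10 := by ring
    · exact integrable_const _
    · filter_upwards [hmem] with r _
      have hcont : ContinuousAt (fun s => g s r) 0 := by
        apply ContinuousAt.div
        · fun_prop
        · fun_prop
        · norm_num
      have h0 : g 0 r = Real.sqrt (ν ^ 2 + 2 * r) + ν := by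
        rw [hg]
        norm_num
        rw [show 2 * r + ν ^ 2 = ν ^ 2 + 2 * r by ring]
        ring
      have := hcont.tendsto.comp hsq
      rw [h0] at this
      exact this
  -- identify the integral with (1 - D h)/√h  on (0,1)
  have hNeq : ∀ h ∈ Ioo (0:ℝ) 1, (1 - D h) / Real.sqrt h = ∫ r, g (Real.sqrt h) r ∂μ := by
    intro h hh
    have hspos : 0 < Real.sqrt h := Real.sqrt_pos.mpr hh.1
    set s := Real.sqrt h with hs_def
    have hs2 : s ^ 2 = h := Real.sq_sqrt hh.1.le
    have hs1 : s ≤ 1 := by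
      rw [hs_def, show (1:ℝ) = Real.sqrt 1 by simp]
      exact Real.sqrt_le_sqrt hh.2.le
    have hcpos : (0:ℝ) < 1 + ν * s := by
      nlinarith [mul_nonneg (by linarith : (0:ℝ) ≤ ν + 1/2) hspos.le]
    set f : ℝ → ℝ := fun r =>
      (1 + r * h - Real.sqrt (r ^ 2 * h ^ 2 + (2 * r + ν ^ 2) * h)) / (1 + ν * s) with hf
    have hfc : Continuous f := by
      rw [hf]
      apply Continuous.div_const
      fun_prop
    have hptwise : ∀ r : ℝ, (1 - f r) / s = g s r := by
      intro r
      have key2 : Real.sqrt (r ^ 2 * h ^ 2 + (2 * r + ν ^ 2) * h)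
          = s * Real.sqrt (r ^ 2 * s ^ 2 + 2 * r + ν ^ 2) := by
        rw [show r ^ 2 * h ^ 2 + (2 * r + ν ^ 2) * h = h * (r ^ 2 * h + 2 * r + ν ^ 2) by ring,
          ← hs2, Real.sqrt_mul (sq_nonneg s), Real.sqrt_sq hspos.le]
      rw [hf, hg]
      simp only
      rw [key2, ← hs2]
      rw [div_eq_div_iff hspos.ne' hcpos.ne', sub_mul, div_mul_cancel₀ _ hcpos.ne']
      ring
    have hsub : (1:ℝ) - D h = ∫ r, (1 - f r) ∂μ := by
      rw [hD h, ← hs_def]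
      rw [integral_sub (integrable_const 1) (hint f hfc), integral_const]
      simp
      rfl
    rw [hsub, ← integral_div]
    exact integral_congr_ae (Eventually.of_forall hptwise)
  have hN : Tendsto (fun h => (1 - D h) / Real.sqrt h) (nhdsWithin 0 (Ioi 0)) (nhds lam) := by
    apply key.congr'
    filter_upwards [hIoo] with h hh
    exact (hNeq h hh).symm
  -- the exponential term
  have hslope : Tendsto (fun x : ℝ => (Real.exp x - 1) / x) (nhdsWithin (0:ℝ) {0}ᶜ) (nhds 1) := by
    have hd := Real.hasDerivAt_exp 0
    rw [hasDerivAt_iff_tendsto_slope] at hd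
    simp only [slope_fun_def_field, Real.exp_zero, sub_zero] at hd
    exact hd
  have hsq' : Tendsto Real.sqrt (nhdsWithin (0:ℝ) (Ioi 0)) (nhdsWithin (0:ℝ) {0}ᶜ) := by
    rw [tendsto_nhdsWithin_iff]
    refine ⟨hsq, ?_⟩
    filter_upwards [self_mem_nhdsWithin] with h hh
    simpa using (Real.sqrt_pos.mpr hh).ne'
  have hE : Tendsto (fun h => (Real.exp (Real.sqrt h) - 1) / Real.sqrt h)
      (nhdsWithin 0 (Ioi 0)) (nhds 1) := hslope.comp hsq'
  -- positivity of lam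
  have hlam0 : 0 ≤ lam := by
    rw [hlam]
    apply integral_nonneg_of_ae
    filter_upwards [hmem] with r hr
    simp only [Pi.zero_apply]
    have h1 : |ν| ≤ Real.sqrt (ν ^ 2 + 2 * r) := by
      rw [← Real.sqrt_sq_eq_abs]
      exact Real.sqrt_le_sqrt (by nlinarith [hr.1])
    linarith [neg_abs_le ν]
  have hden_ne : (1:ℝ) + lam ≠ 0 := by linarith
  -- combine
  have hfinal : Tendsto (fun h => K * ((1 - D h) / Real.sqrt h) /
      ((Real.exp (Real.sqrt h) - 1) / Real.sqrt h + (1 - D h) / Real.sqrt h))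
      (nhdsWithin 0 (Ioi 0)) (nhds (K * lam / (1 + lam))) :=
    (tendsto_const_nhds.mul hN).div (hE.add hN) hden_ne
  have hval : K * lam / (1 + lam) = lam * K / (1 + lam) := by ring
  rw [hval] at hfinal
  apply hfinal.congr'
  filter_upwards [hIoo] with h hh
  have hspos : 0 < Real.sqrt h := Real.sqrt_pos.mpr hh.1
  rw [ha h]
  rw [← add_div, show Real.exp (Real.sqrt h) - 1 + (1 - D h)
    = Real.exp (Real.sqrt h) - D h by ring,
    mul_div_assoc K, div_div_div_same' hspos.ne', ← mul_div_assoc]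
end

section
/- Fix ν ≥ -1/2, K > 0, and let λ = ∫₁² (√(ν²+2r)+ν) dr > 0. Define η(z; ã) = (K-ã) ∫₁² (ã/z)^{√(ν²+2r)+ν} dr for 0 < ã < K and z ≥ ã. Then the right derivative ∂_z η(ã+; ã) = -((K-ã)/ã)·λ, and this quantity is ≥ -1 if and only if ã ≥ λK/(1+λ). -/
open MeasureTheory Real Set

/-- with `λ = ∫₁² (√(ν²+2r)+ν) dr > 0` and
`η(z; ã) = (K-ã) ∫₁² (ã/z)^{√(ν²+2r)+ν} dr`, the right derivative of `z ↦ η(z; ã)`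
at `z = ã` equals `-((K-ã)/ã) λ`, and this is `≥ -1` iff `ã ≥ λK/(1+λ)`. -/
theorem stmt9 (ν K : ℝ) (hν : ν ≥ -(1/2)) (hK : 0 < K)
    (lam : ℝ) (hlam : lam = ∫ r in Set.Icc (1:ℝ) 2, (Real.sqrt (ν ^ 2 + 2 * r) + ν))
    (hlampos : 0 < lam)
    (η : ℝ → ℝ → ℝ)
    (hη : ∀ atil z, η atil z = (K - atil) *
        ∫ r in Set.Icc (1:ℝ) 2, (atil / z) ^ (Real.sqrt (ν ^ 2 + 2 * r) + ν))
    (atil : ℝ) (h0 : 0 < atil) (haK : atil < K) :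
    HasDerivWithinAt (η atil) (-((K - atil) / atil) * lam) (Set.Ici atil) atil ∧
    (-((K - atil) / atil) * lam ≥ -1 ↔ atil ≥ lam * K / (1 + lam)) := by
  set p : ℝ → ℝ := fun r => Real.sqrt (ν ^ 2 + 2 * r) + ν with hp
  set P : ℝ := Real.sqrt (ν ^ 2 + 4) + |ν| with hP
  have hPnn : 0 ≤ P := add_nonneg (Real.sqrt_nonneg _) (abs_nonneg _)
  have hpP : ∀ r ∈ Set.Icc (1:ℝ) 2, 0 < p r ∧ p r ≤ P := by
    intro r hr
    have h1 : (1:ℝ) ≤ r := hr.1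
    have h2 : r ≤ 2 := hr.2
    constructor
    · have : Real.sqrt (ν ^ 2) < Real.sqrt (ν ^ 2 + 2 * r) :=
        Real.sqrt_lt_sqrt (by positivity) (by nlinarith)
      rw [Real.sqrt_sq_eq_abs] at this
      have := neg_abs_le ν
      simp only [hp]
      nlinarith
    · have : Real.sqrt (ν ^ 2 + 2 * r) ≤ Real.sqrt (ν ^ 2 + 4) :=
        Real.sqrt_le_sqrt (by nlinarith)
      have := le_abs_self ν
      simp only [hp, hP]
      linarith
  set μ := volume.restrict (Set.Icc (1:ℝ) 2) with hμ
  set F : ℝ → ℝ → ℝ := fun z r => (atil / z) ^ (p r) with hF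
  set F' : ℝ → ℝ → ℝ := fun z r => -(p r * (atil / z) ^ (p r) / z) with hF'
  have hε : (0:ℝ) < atil / 2 := by linarith
  have hball : ∀ z ∈ Metric.ball atil (atil / 2), atil / 2 < z ∧ z < 3 * atil / 2 := by
    intro z hz
    rw [Metric.mem_ball, Real.dist_eq, abs_lt] at hz
    constructor <;> linarith [hz.1, hz.2]
  have hpc : Continuous p := by
    apply Continuous.add _ continuous_const
    exact Real.continuous_sqrt.comp (by continuity)
  -- measurability of F z for z in ball
  have hFmeas : ∀ᶠ z in nhds atil, AEStronglyMeasurable (F z) μ := by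
    filter_upwards [Metric.ball_mem_nhds atil hε] with z hz
    have hzpos : 0 < z := lt_trans hε (hball z hz).1
    have hbpos : 0 < atil / z := div_pos h0 hzpos
    have : F z = fun r => Real.exp (Real.log (atil / z) * p r) := by
      funext r
      simp only [hF, Real.rpow_def_of_pos hbpos]
    rw [this]
    exact (Real.continuous_exp.comp (continuous_const.mul hpc)).aestronglyMeasurable
  have hFint : Integrable (F atil) μ := by
    have : F atil = fun _ => (1:ℝ) := by
      funext r
      simp [hF, div_self (ne_of_gt h0)]
    rw [this]
    exact integrable_const _
  have hF'meas : AEStronglyMeasurable (F' atil) μ := by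
    have : F' atil = fun r => -(p r * 1 / atil) := by
      funext r
      simp [hF', div_self (ne_of_gt h0)]
    rw [this]
    exact (((hpc.mul continuous_const).div_const _).neg).aestronglyMeasurable
  have h_diff : ∀ᵐ r ∂μ, ∀ z ∈ Metric.ball atil (atil / 2),
      HasDerivAt (fun z => F z r) (F' z r) z := by
    refine Filter.Eventually.of_forall (fun r => fun z hz => ?_)
    have hzpos : 0 < z := lt_trans hε (hball z hz).1
    have hzne : z ≠ 0 := ne_of_gt hzpos
    have hbpos : 0 < atil / z := div_pos h0 hzpos
    have h1 : HasDerivAt (fun z : ℝ => atil / z) (atil * (-(z ^ 2)⁻¹)) z := by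
      simpa [div_eq_mul_inv] using (hasDerivAt_inv hzne).const_mul atil
    have h2 := h1.rpow_const (p := p r) (Or.inl (ne_of_gt hbpos))
    convert h2 using 1
    simp only [hF']
    rw [Real.rpow_sub hbpos, Real.rpow_one]
    field_simp
  have h_bound : ∀ᵐ r ∂μ, ∀ z ∈ Metric.ball atil (atil / 2),
      ‖F' z r‖ ≤ P * (2:ℝ) ^ P * (2 / atil) := by
    rw [hμ]
    filter_upwards [ae_restrict_mem measurableSet_Icc] with r hr z hz
    obtain ⟨hp0, hpPle⟩ := hpP r hr
    have hzpos : 0 < z := lt_trans hε (hball z hz).1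
    have hbpos : 0 < atil / z := div_pos h0 hzpos
    have hble : atil / z ≤ 2 := by
      rw [div_le_iff₀ hzpos]
      linarith [(hball z hz).1]
    have hrpow_pos : 0 < (atil / z) ^ p r := Real.rpow_pos_of_pos hbpos _
    have h1 : (atil / z) ^ p r ≤ (2:ℝ) ^ p r :=
      Real.rpow_le_rpow (le_of_lt hbpos) hble (le_of_lt hp0)
    have h2 : (2:ℝ) ^ p r ≤ (2:ℝ) ^ P :=
      Real.rpow_le_rpow_of_exponent_le one_le_two hpPle
    have h3 : (1:ℝ) / z ≤ 2 / atil := by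
      rw [div_le_div_iff₀ hzpos h0]
      linarith [(hball z hz).1]
    have hnorm : ‖F' z r‖ = p r * (atil / z) ^ p r * (1 / z) := by
      simp only [hF', norm_neg, Real.norm_eq_abs]
      rw [abs_of_nonneg (by positivity)]
      ring
    rw [hnorm]
    have hz1 : (0:ℝ) < 1 / z := by positivity
    have hP2 : p r * (atil / z) ^ p r ≤ P * (2:ℝ) ^ P :=
      mul_le_mul hpPle (h1.trans h2) hrpow_pos.le hPnn
    exact mul_le_mul hP2 h3 hz1.le (by positivity)
  have key := hasDerivAt_integral_of_dominated_loc_of_deriv_le (Metric.ball_mem_nhds atil hε) hFmeas hFint hF'meas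
    h_bound (integrable_const _) h_diff
  have hint : (∫ r, F' atil r ∂μ) = -(lam / atil) := by
    have : (fun r => F' atil r) = fun r => -(p r / atil) := by
      funext r
      simp [hF', div_self (ne_of_gt h0)]
    rw [this, hlam]
    rw [integral_neg, integral_div]
  have hderiv : HasDerivAt (η atil) (-((K - atil) / atil) * lam) atil := by
    have heq : η atil = fun z => (K - atil) * ∫ r, F z r ∂μ := by
      funext z
      rw [hη]
    rw [heq]
    have := (key.2).const_mul (K - atil)
    rw [hint] at this
    rw [show -((K - atil) / atil) * lam = (K - atil) * -(lam / atil) by ring]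
    exact this
  refine ⟨hderiv.hasDerivWithinAt, ?_⟩
  have h1lam : (0:ℝ) < 1 + lam := by linarith
  rw [ge_iff_le, ge_iff_le, div_le_iff₀ h1lam]
  constructor
  · intro h
    have h' : (K - atil) / atil * lam ≤ 1 := by linarith
    rw [div_mul_eq_mul_div, div_le_one h0] at h'
    nlinarith
  · intro h
    have h' : (K - atil) * lam ≤ atil := by nlinarith
    have : (K - atil) / atil * lam ≤ 1 := by
      rw [div_mul_eq_mul_div, div_le_one h0]; exact h'
    linarith
end

section
/- Let σ : ℝ → ℝ satisfy σ(x) ≥ σ̲ > 0 for all x and have total variation bounded by C (i.e., Σₖ |σ(y_{k+1}) - σ(y_k)| ≤ C for every increasing sequence (y_k)). Define the grid recursively by x₀ = 0, d_{0,±} = σ(0)√h, and for k ≥ 1: x_k = x_{k-1} + d_{k-1,+}, d_{k,-} = d_{k-1,+}, d_{k,+} = σ²(x_k)h/d_{k,-} (symmetrically for k ≤ -1). Then σ(0)e^{-2C/σ̲}·√h ≤ d_{k,±} ≤ σ(0)e^{2C/σ̲}·√h for all k ∈ ℤ. -/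
open Real Finset

lemma logdiff (σlow : ℝ) (hσlow : 0 < σlow) :
    ∀ a b : ℝ, σlow ≤ a → σlow ≤ b →
    Real.log a - Real.log b ≤ |a - b| / σlow := by
  intro a b ha hb
  have hb0 : 0 < b := hσlow.trans_le hb
  have ha0 : 0 < a := hσlow.trans_le ha
  have h1 : Real.log a - Real.log b = Real.log (a / b) := (Real.log_div ha0.ne' hb0.ne').symm
  rw [h1]
  have h2 : Real.log (a / b) ≤ a / b - 1 := Real.log_le_sub_one_of_pos (div_pos ha0 hb0)
  have h3 : a / b - 1 = (a - b) / b := by field_simp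
  have h4 : (a - b) / b ≤ |a - b| / σlow :=
    div_le_div₀ (abs_nonneg _) (le_abs_self _) hσlow hb
  linarith

lemma logdiff_abs (σlow : ℝ) (hσlow : 0 < σlow) {a b : ℝ} (ha : σlow ≤ a) (hb : σlow ≤ b) :
    |Real.log a - Real.log b| ≤ |a - b| / σlow := by
  rw [abs_sub_le_iff]
  refine ⟨logdiff σlow hσlow a b ha hb, ?_⟩
  rw [abs_sub_comm]
  exact logdiff σlow hσlow b a hb ha

lemma core (σlow C h : ℝ) (hσlow : 0 < σlow) (hh : 0 < h)
    (s : ℕ → ℝ) (hs : ∀ n, σlow ≤ s n)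
    (hTV : ∀ n, ∑ k ∈ Finset.range n, |s (k + 1) - s k| ≤ C)
    (D : ℕ → ℝ) (hD0 : D 0 = s 0 * Real.sqrt h)
    (hrec : ∀ n : ℕ, D (n + 1) = (s (n + 1)) ^ 2 * h / D n) :
    ∀ n : ℕ, s 0 * Real.exp (-(2 * C / σlow)) * Real.sqrt h ≤ D n ∧
      D n ≤ s 0 * Real.exp (2 * C / σlow) * Real.sqrt h := by
  have hsq : 0 < Real.sqrt h := Real.sqrt_pos.2 hh
  have hspos : ∀ n, 0 < s n := fun n => hσlow.trans_le (hs n)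
  have hDpos : ∀ n, 0 < D n := by
    intro n; induction n with
    | zero => rw [hD0]; exact mul_pos (hspos 0) hsq
    | succ n ih => rw [hrec n]; exact div_pos (mul_pos (pow_pos (hspos _) 2) hh) ih
  set L : ℕ → ℝ := fun n => Real.log (D n) - Real.log (s n) - Real.log (Real.sqrt h) with hL
  have hlogh : Real.log h = 2 * Real.log (Real.sqrt h) := by
    rw [Real.log_sqrt hh.le]; ring
  have hLrec : ∀ n, L (n + 1) = (Real.log (s (n + 1)) - Real.log (s n)) - L n := by
    intro n
    have : Real.log (D (n + 1)) = 2 * Real.log (s (n + 1)) + Real.log h - Real.log (D n) := by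
      rw [hrec n, Real.log_div (mul_pos (pow_pos (hspos _) 2) hh).ne' (hDpos n).ne',
        Real.log_mul (pow_pos (hspos _) 2).ne' hh.ne', Real.log_pow]
      push_cast; ring
    simp only [hL]
    rw [this, hlogh]; ring
  have hL0 : L 0 = 0 := by
    simp only [hL, hD0, Real.log_mul (hspos 0).ne' hsq.ne']; ring
  have hLbound : ∀ n, |L n| ≤ ∑ k ∈ Finset.range n, |Real.log (s (k + 1)) - Real.log (s k)| := by
    intro n; induction n with
    | zero => simp [hL0]
    | succ n ih =>
      rw [hLrec n, Finset.sum_range_succ]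
      calc |(Real.log (s (n + 1)) - Real.log (s n)) - L n|
          ≤ |Real.log (s (n + 1)) - Real.log (s n)| + |L n| := abs_sub _ _
        _ ≤ _ := by linarith
  have hlogsum : ∀ n, ∑ k ∈ Finset.range n, |Real.log (s (k + 1)) - Real.log (s k)| ≤ C / σlow := by
    intro n
    calc ∑ k ∈ Finset.range n, |Real.log (s (k + 1)) - Real.log (s k)|
        ≤ ∑ k ∈ Finset.range n, |s (k + 1) - s k| / σlow := by
          refine Finset.sum_le_sum fun k _ => logdiff_abs σlow hσlow (hs _) (hs _)
      _ = (∑ k ∈ Finset.range n, |s (k + 1) - s k|) / σlow := by rw [Finset.sum_div]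
      _ ≤ C / σlow := by gcongr; exact hTV n
  have hs0diff : ∀ n, |Real.log (s n) - Real.log (s 0)| ≤ C / σlow := by
    intro n
    have htel : s n - s 0 = ∑ k ∈ Finset.range n, (s (k + 1) - s k) :=
      (Finset.sum_range_sub s n).symm
    have h1 : |s n - s 0| ≤ ∑ k ∈ Finset.range n, |s (k + 1) - s k| := by
      rw [htel]; exact Finset.abs_sum_le_sum_abs _ _
    calc |Real.log (s n) - Real.log (s 0)| ≤ |s n - s 0| / σlow :=
          logdiff_abs σlow hσlow (hs n) (hs 0)
      _ ≤ C / σlow := by gcongr; exact h1.trans (hTV n)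
  intro n
  have hLn : |L n| ≤ C / σlow := (hLbound n).trans (hlogsum n)
  have hcomb : |Real.log (D n) - (Real.log (s 0) + Real.log (Real.sqrt h))| ≤ 2 * C / σlow := by
    have : Real.log (D n) - (Real.log (s 0) + Real.log (Real.sqrt h))
        = L n + (Real.log (s n) - Real.log (s 0)) := by simp only [hL]; ring
    rw [this]
    calc |L n + (Real.log (s n) - Real.log (s 0))|
        ≤ |L n| + |Real.log (s n) - Real.log (s 0)| := abs_add_le _ _
      _ ≤ C / σlow + C / σlow := add_le_add hLn (hs0diff n)
      _ = 2 * C / σlow := by ring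
  rw [abs_le] at hcomb
  constructor
  · have := Real.exp_le_exp.2 (by linarith [hcomb.1] :
      Real.log (s 0) + Real.log (Real.sqrt h) + (-(2 * C / σlow)) ≤ Real.log (D n))
    rwa [Real.exp_add, Real.exp_add, Real.exp_log (hspos 0), Real.exp_log hsq,
      Real.exp_log (hDpos n), mul_right_comm] at this
  · have := Real.exp_le_exp.2 (by linarith [hcomb.2] :
      Real.log (D n) ≤ Real.log (s 0) + Real.log (Real.sqrt h) + 2 * C / σlow)
    rwa [Real.exp_add, Real.exp_add, Real.exp_log (hspos 0), Real.exp_log hsq,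
      Real.exp_log (hDpos n), mul_right_comm] at this

/-- if `σ ≥ σ̲ > 0` has total variation bounded by `C`, then the
recursively-defined grid spacings `d_{k,±}` satisfy
`σ(0) e^{-2C/σ̲} √h ≤ d_{k,±} ≤ σ(0) e^{2C/σ̲} √h` for all `k ∈ ℤ`. -/
theorem stmt11 (σ : ℝ → ℝ) (σlow C h : ℝ) (hσlow : 0 < σlow) (hh : 0 < h)
    (hσ : ∀ x, σlow ≤ σ x)
    (hTV : ∀ y : ℕ → ℝ, StrictMono y →
      ∀ n : ℕ, ∑ k ∈ Finset.range n, |σ (y (k + 1)) - σ (y k)| ≤ C)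
    (x dp dm : ℤ → ℝ)
    (hx0 : x 0 = 0)
    (hdp0 : dp 0 = σ 0 * Real.sqrt h) (hdm0 : dm 0 = σ 0 * Real.sqrt h)
    (hpos : ∀ k : ℤ, 1 ≤ k →
      x k = x (k - 1) + dp (k - 1) ∧ dm k = dp (k - 1) ∧
        dp k = σ (x k) ^ 2 * h / dm k)
    (hneg : ∀ k : ℤ, k ≤ -1 →
      x k = x (k + 1) - dm (k + 1) ∧ dp k = dm (k + 1) ∧
        dm k = σ (x k) ^ 2 * h / dp k) :
    ∀ k : ℤ,
      σ 0 * Real.exp (-(2 * C / σlow)) * Real.sqrt h ≤ dp k ∧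
      dp k ≤ σ 0 * Real.exp (2 * C / σlow) * Real.sqrt h ∧
      σ 0 * Real.exp (-(2 * C / σlow)) * Real.sqrt h ≤ dm k ∧
      dm k ≤ σ 0 * Real.exp (2 * C / σlow) * Real.sqrt h := by
  have hsq : 0 < Real.sqrt h := Real.sqrt_pos.2 hh
  have hσp : ∀ t, 0 < σ t := fun t => hσlow.trans_le (hσ t)
  -- positive-side step, rephrased over ℕ
  have hstep1 : ∀ n : ℕ, x ((n : ℤ) + 1) = x n + dp n ∧ dm ((n : ℤ) + 1) = dp n ∧
      dp ((n : ℤ) + 1) = σ (x ((n : ℤ) + 1)) ^ 2 * h / dm ((n : ℤ) + 1) := by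
    intro n
    have := hpos ((n : ℤ) + 1) (by omega)
    simpa using this
  have dppos : ∀ n : ℕ, 0 < dp (n : ℤ) := by
    intro n; induction n with
    | zero => simp only [Nat.cast_zero]; rw [hdp0]; exact mul_pos (hσp 0) hsq
    | succ n ih =>
      have h1 := (hstep1 n).2.1
      have h2 := (hstep1 n).2.2
      push_cast
      rw [h2, h1]
      exact div_pos (mul_pos (pow_pos (hσp _) 2) hh) ih
  have ymono : StrictMono (fun n : ℕ => x (n : ℤ)) := by
    apply strictMono_nat_of_lt_succ
    intro n
    have h1 := (hstep1 n).1
    push_cast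
    rw [h1]
    linarith [dppos n]
  have hTVp : ∀ n : ℕ, ∑ k ∈ Finset.range n, |σ (x ((k + 1 : ℕ) : ℤ)) - σ (x (k : ℤ))| ≤ C := by
    intro n
    have := hTV (fun n : ℕ => x (n : ℤ)) ymono n
    simpa using this
  have corep := core σlow C h hσlow hh (fun n : ℕ => σ (x (n : ℤ))) (fun n => hσ _)
    (by intro n; exact hTVp n)
    (fun n : ℕ => dp (n : ℤ))
    (by simp only [Nat.cast_zero]; rw [hdp0, hx0])
    (by
      intro n
      have h1 := (hstep1 n).2.1
      have h2 := (hstep1 n).2.2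
      push_cast
      rw [h2, h1])
  -- negative side
  have hstepn : ∀ n : ℕ, x (-(n : ℤ) - 1) = x (-(n : ℤ)) - dm (-(n : ℤ)) ∧
      dp (-(n : ℤ) - 1) = dm (-(n : ℤ)) ∧
      dm (-(n : ℤ) - 1) = σ (x (-(n : ℤ) - 1)) ^ 2 * h / dp (-(n : ℤ) - 1) := by
    intro n
    have := hneg (-(n : ℤ) - 1) (by omega)
    have e : (-(n : ℤ) - 1) + 1 = -(n : ℤ) := by ring
    rw [e] at this
    exact this
  have dmpos : ∀ n : ℕ, 0 < dm (-(n : ℤ)) := by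
    intro n; induction n with
    | zero => simp only [Nat.cast_zero, neg_zero]; rw [hdm0]; exact mul_pos (hσp 0) hsq
    | succ n ih =>
      have h1 := (hstepn n).2.1
      have h2 := (hstepn n).2.2
      have e : -((n : ℤ) + 1) = -(n : ℤ) - 1 := by ring
      push_cast
      rw [e, h2, h1]
      exact div_pos (mul_pos (pow_pos (hσp _) 2) hh) ih
  have xstep : ∀ m : ℤ, m ≤ -1 → x m < x (m + 1) := by
    intro m hm
    have h1 := (hneg m hm).1
    have hd : 0 < dm (m + 1) := by
      have e : -(((-(m + 1)).toNat : ℕ) : ℤ) = m + 1 := by omega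
      have := dmpos (-(m + 1)).toNat
      rwa [e] at this
    rw [h1]; linarith
  have xmono_neg : ∀ a b : ℤ, a ≤ b → b ≤ 0 → x a ≤ x b := by
    intro a b hab hb
    rcases Int.le.dest hab with ⟨c, rfl⟩
    induction c with
    | zero => simp
    | succ c ih =>
      have h1 : x (a + c) ≤ x (a + c + 1) := by
        rcases eq_or_lt_of_le (show a + (c : ℤ) + 1 ≤ 0 by push_cast at hb ⊢; omega) with he | hl
        · exact (xstep (a + c) (by omega)).le
        · exact (xstep (a + c) (by omega)).le
      have h2 := ih (by push_cast at hb ⊢; omega) (by push_cast at hb ⊢; omega)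
      push_cast at h1 h2 ⊢
      calc x a ≤ x (a + c) := h2
        _ ≤ x (a + c + 1) := h1
        _ = x (a + (c + 1)) := by ring_nf
  have hTVn : ∀ n : ℕ, ∑ k ∈ Finset.range n, |σ (x (-((k + 1 : ℕ) : ℤ))) - σ (x (-(k : ℤ)))| ≤ C := by
    intro n
    set z : ℕ → ℝ := fun j => if j ≤ n then x ((j : ℤ) - n) else (j : ℝ) - n with hzdef
    have zval : ∀ j : ℕ, j ≤ n → z j = x ((j : ℤ) - n) := fun j hj => if_pos hj
    have zmono : StrictMono z := by
      apply strictMono_nat_of_lt_succ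
      intro j
      by_cases hj1 : j + 1 ≤ n
      · rw [zval j (by omega), zval (j + 1) hj1]
        have e : ((j + 1 : ℕ) : ℤ) - n = ((j : ℤ) - n) + 1 := by push_cast; ring
        rw [e]
        exact xstep _ (by omega)
      · by_cases hj2 : j ≤ n
        · have hjn : j = n := by omega
          subst hjn
          rw [zval j le_rfl]
          simp only [hzdef, if_neg hj1]
          have : ((j : ℤ) - j) = 0 := by ring
          rw [this, hx0]
          push_cast
          linarith
        · simp only [hzdef, if_neg hj1, if_neg hj2]
          push_cast
          linarith
    have key : ∀ j ∈ Finset.range n,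
        |σ (x (-(((n - 1 - j) + 1 : ℕ) : ℤ))) - σ (x (-((n - 1 - j : ℕ) : ℤ)))|
          = |σ (z (j + 1)) - σ (z j)| := by
      intro j hj
      rw [Finset.mem_range] at hj
      rw [zval j (by omega), zval (j + 1) (by omega)]
      have e1 : -(((n - 1 - j) + 1 : ℕ) : ℤ) = (j : ℤ) - n := by omega
      have e2 : -((n - 1 - j : ℕ) : ℤ) = ((j + 1 : ℕ) : ℤ) - n := by omega
      rw [e1, e2, abs_sub_comm]
    calc ∑ k ∈ Finset.range n, |σ (x (-((k + 1 : ℕ) : ℤ))) - σ (x (-(k : ℤ)))|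
        = ∑ j ∈ Finset.range n,
            |σ (x (-(((n - 1 - j) + 1 : ℕ) : ℤ))) - σ (x (-((n - 1 - j : ℕ) : ℤ)))| :=
          (Finset.sum_range_reflect (fun k => |σ (x (-((k + 1 : ℕ) : ℤ))) - σ (x (-(k : ℤ)))|) n).symm
      _ = ∑ j ∈ Finset.range n, |σ (z (j + 1)) - σ (z j)| := Finset.sum_congr rfl key
      _ ≤ C := hTV z zmono n
  have coren := core σlow C h hσlow hh (fun n : ℕ => σ (x (-(n : ℤ)))) (fun n => hσ _)
    (by intro n; exact hTVn n)
    (fun n : ℕ => dm (-(n : ℤ)))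
    (by simp only [Nat.cast_zero, neg_zero]; rw [hdm0, hx0])
    (by
      intro n
      have h1 := (hstepn n).2.1
      have h2 := (hstepn n).2.2
      have e : -(((n : ℕ) : ℤ) + 1) = -(n : ℤ) - 1 := by ring
      push_cast
      rw [e, h2, h1])
  have corep' : ∀ n : ℕ, σ 0 * Real.exp (-(2 * C / σlow)) * Real.sqrt h ≤ dp (n : ℤ) ∧
      dp (n : ℤ) ≤ σ 0 * Real.exp (2 * C / σlow) * Real.sqrt h := by
    intro n
    have := corep n
    simpa only [Nat.cast_zero, hx0] using this
  have coren' : ∀ n : ℕ, σ 0 * Real.exp (-(2 * C / σlow)) * Real.sqrt h ≤ dm (-(n : ℤ)) ∧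
      dm (-(n : ℤ)) ≤ σ 0 * Real.exp (2 * C / σlow) * Real.sqrt h := by
    intro n
    have := coren n
    simpa only [Nat.cast_zero, neg_zero, hx0] using this
  intro k
  obtain ⟨n, rfl | rfl⟩ := Int.eq_nat_or_neg k
  · have hdm : σ 0 * Real.exp (-(2 * C / σlow)) * Real.sqrt h ≤ dm (n : ℤ) ∧
        dm (n : ℤ) ≤ σ 0 * Real.exp (2 * C / σlow) * Real.sqrt h := by
      cases n with
      | zero =>
        simp only [Nat.cast_zero]
        rw [hdm0, ← hdp0]
        exact ⟨by simpa using (corep' 0).1, by simpa using (corep' 0).2⟩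
      | succ m =>
        have hd := (hpos ((m + 1 : ℕ) : ℤ) (by push_cast; omega)).2.1
        have e : ((m + 1 : ℕ) : ℤ) - 1 = (m : ℤ) := by push_cast; ring
        rw [e] at hd
        rw [hd]
        exact corep' m
    exact ⟨(corep' n).1, (corep' n).2, hdm.1, hdm.2⟩
  · have hdp : σ 0 * Real.exp (-(2 * C / σlow)) * Real.sqrt h ≤ dp (-(n : ℤ)) ∧
        dp (-(n : ℤ)) ≤ σ 0 * Real.exp (2 * C / σlow) * Real.sqrt h := by
      cases n with
      | zero =>
        simp only [Nat.cast_zero, neg_zero]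
        exact ⟨by simpa using (corep' 0).1, by simpa using (corep' 0).2⟩
      | succ m =>
        have hd := (hneg (-((m + 1 : ℕ) : ℤ)) (by push_cast; omega)).2.1
        have e : -((m + 1 : ℕ) : ℤ) + 1 = -(m : ℤ) := by push_cast; ring
        rw [e] at hd
        rw [hd]
        exact coren' m
    exact ⟨hdp.1, hdp.2, (coren' n).1, (coren' n).2⟩
end
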